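/- arXiv:2109.10262 — 2 statements merged into one kernel-verified Lean document; each statement's English description precedes it below -/
import Mathlib

section
/- Let R be a linearly ordered commutative ring, let p be a univariate polynomial over R of degree at most n, and let t₁ ≤ t₂ in R. Suppose that for every k with 1 ≤ k ≤ n, the k-th iterated formal derivative of p evaluated at t₁ is nonnegative. Then p(t₁) ≤ p(t₂). In particular, every polynomial of degree n over an ordered commutative ring is n-smooth: it cannot decrease across any interval on which its formal derivatives of order up to n are nonnegative. -/
/-- A polynomial of degree at most `n` over a linearly ordered commutative ring is
`n`-smooth: if all of its iterated formal derivatives of order `1 ≤ k ≤ n` are nonnegative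
at `t₁`, then `p(t₁) ≤ p(t₂)` whenever `t₁ ≤ t₂`. -/
theorem poly_n_smooth {R : Type*} [CommRing R] [LinearOrder R] [IsStrictOrderedRing R]
    (n : ℕ) (p : Polynomial R) (hp : p.natDegree ≤ n)
    (t₁ t₂ : R) (ht : t₁ ≤ t₂)
    (hd : ∀ k, 1 ≤ k → k ≤ n → 0 ≤ ((⇑Polynomial.derivative)^[k] p).eval t₁) :
    p.eval t₁ ≤ p.eval t₂ := by
  have hdeg : (Polynomial.taylor t₁ p).natDegree < n + 1 := by
    rw [Polynomial.natDegree_taylor]; omega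
  have h1 : p.eval t₂ = (Polynomial.taylor t₁ p).eval (t₂ - t₁) := by
    rw [Polynomial.taylor_eval]; ring_nf
  rw [h1, Polynomial.eval_eq_sum_range' hdeg]
  rw [Finset.sum_range_succ']
  simp only [Polynomial.taylor_coeff, pow_zero, mul_one, Polynomial.hasseDeriv_zero,
    LinearMap.id_apply]
  have hterm : ∀ i ∈ Finset.range n,
      0 ≤ (Polynomial.hasseDeriv (i + 1) p).eval t₁ * (t₂ - t₁) ^ (i + 1) := by
    intro i hi
    simp only [Finset.mem_range] at hi
    have key : (Nat.factorial (i + 1) : R) * (Polynomial.hasseDeriv (i + 1) p).eval t₁ =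
        ((⇑Polynomial.derivative)^[i + 1] p).eval t₁ := by
      have := Polynomial.factorial_smul_hasseDeriv (R := R) (i + 1)
      have h2 := congrArg (fun q => Polynomial.eval t₁ q) (congrFun this p)
      simpa [nsmul_eq_mul] using h2
    have hfac : (0 : R) < (Nat.factorial (i + 1) : R) := by
      exact_mod_cast Nat.cast_pos.mpr (Nat.factorial_pos _)
    have hnn : 0 ≤ (Polynomial.hasseDeriv (i + 1) p).eval t₁ := by
      have hd' := hd (i + 1) (by omega) (by omega)
      rw [← key] at hd'
      exact nonneg_of_mul_nonneg_right hd' hfac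
    exact mul_nonneg hnn (pow_nonneg (by linarith) _)
  have := Finset.sum_nonneg hterm
  linarith
end

section
/- Let R be a linearly ordered commutative ring, let n be a positive integer, let l be a multivariate polynomial in n variables over R, and let s₁, …, sₙ be univariate polynomials over R satisfying dsᵢ/dt = −(∂l/∂xᵢ)(s) for every i. Then for every t ∈ R, the formal derivative of the composite l(s), evaluated at t, is ≤ 0. That is, the R-polynomial domain supports generalized gradient-based optimization: every generalized gradient flow is a 1-descending flow. -/
open Polynomial MvPolynomial

lemma derivative_aeval_chain {R : Type*} [CommRing R] {n : ℕ}
    (s : Fin n → Polynomial R) (l : MvPolynomial (Fin n) R) :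
    Polynomial.derivative (MvPolynomial.aeval s l) =
      ∑ i, MvPolynomial.aeval s (MvPolynomial.pderiv i l) * Polynomial.derivative (s i) := by
  induction l using MvPolynomial.induction_on with
  | C a => simp
  | add p q hp hq => simp [hp, hq, Finset.sum_add_distrib, add_mul]
  | mul_X p i hp =>
      simp only [map_mul, Polynomial.derivative_mul, MvPolynomial.aeval_X, hp,
        MvPolynomial.pderiv_mul, MvPolynomial.pderiv_X, map_add, add_mul,
        Finset.sum_add_distrib, Finset.sum_mul]
      have h2 : ∀ x : Fin n, (MvPolynomial.aeval s) p *
          (MvPolynomial.aeval s) ((Pi.single x 1 : Fin n → MvPolynomial (Fin n) R) i) * Polynomial.derivative (s x)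
          = if x = i then (MvPolynomial.aeval s) p * Polynomial.derivative (s i) else 0 := by
        intro x
        rcases eq_or_ne x i with h | h <;> simp [h, Pi.single_apply]
      rw [Finset.sum_congr rfl (fun x _ => h2 x), Finset.sum_ite_eq' Finset.univ i]
      simp [add_comm, mul_comm, mul_assoc, mul_left_comm]

/-- The `R`-polynomial domain supports generalized gradient-based optimization: along a
formal gradient flow `dsᵢ/dt = −(∂l/∂xᵢ)(s)` over a linearly ordered commutative ring,
the formal derivative of the composite objective evaluates to a nonpositive value at
every time `t`, i.e. every generalized gradient flow is a 1-descending flow. -/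
theorem formal_gradient_flow_descending {R : Type*} [CommRing R] [LinearOrder R] [IsStrictOrderedRing R]
    {n : ℕ} (hn : 0 < n)
    (l : MvPolynomial (Fin n) R) (s : Fin n → Polynomial R)
    (hs : ∀ i, Polynomial.derivative (s i) =
      -(MvPolynomial.aeval s (MvPolynomial.pderiv i l))) :
    ∀ t : R, (Polynomial.derivative (MvPolynomial.aeval s l)).eval t ≤ 0 := by
  intro t
  rw [derivative_aeval_chain]
  simp only [hs, mul_neg, ← sq]
  rw [Polynomial.eval_finset_sum]
  apply Finset.sum_nonpos
  intro i _
  simp only [Polynomial.eval_neg, Polynomial.eval_pow, neg_nonpos]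
  positivity
end
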